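/- arXiv:2301.00040 — 7 statements merged into one kernel-verified Lean document; each statement's English description precedes it below -/
import Mathlib

section
/- Let H be a real Hilbert space, let X and Z be complete subspaces of H such that X^{⊥Z} is complete, and let y ∈ H with y^{⊥Z} ≠ 0. Then the partial R²-value satisfies R²_{y∼X|Z} = R²_{y^{⊥Z}∼X^{⊥Z}}, i.e. (R²_{y∼X+Z} − R²_{y∼Z})/(1 − R²_{y∼Z}) = 1 − ‖(y^{⊥Z})^{⊥X^{⊥Z}}‖²/‖y^{⊥Z}‖². -/
/-!
R²-calculus in real Hilbert spaces (Freidling & Zhao, "Optimization-based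
Sensitivity Analysis for Unmeasured Confounding using Partial Correlations").
-/

noncomputable section

open Submodule RealInnerProductSpace

variable {H : Type*} [NormedAddCommGroup H] [InnerProductSpace ℝ H]

/-- The residual `h^{⊥M} = h − P_M h` of `h` after projecting onto `M`. -/
def resid (M : Submodule ℝ H) [HasOrthogonalProjection M] (h : H) : H :=
  h - (orthogonalProjection M h : H)

/-- The marginal R²-value `R²_{y∼X} = 1 − ‖y^{⊥X}‖²/‖y‖²`. -/
def R2 (y : H) (X : Submodule ℝ H) [HasOrthogonalProjection X] : ℝ :=
  1 - ‖resid X y‖ ^ 2 / ‖y‖ ^ 2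

/-- The partial R²-value `R²_{y∼X|Z} = (R²_{y∼X+Z} − R²_{y∼Z})/(1 − R²_{y∼Z})`. -/
def R2p (y : H) (X Z : Submodule ℝ H) [HasOrthogonalProjection (X ⊔ Z)]
    [HasOrthogonalProjection Z] : ℝ :=
  (R2 y (X ⊔ Z) - R2 y Z) / (1 - R2 y Z)

/-- The partial R-value `R_{y∼x|Z} = ⟪y^{⊥Z}, x^{⊥Z}⟫/(‖y^{⊥Z}‖·‖x^{⊥Z}‖)`. -/
def Rp (y x : H) (Z : Submodule ℝ H) [HasOrthogonalProjection Z] : ℝ :=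
  ⟪resid Z y, resid Z x⟫ / (‖resid Z y‖ * ‖resid Z x‖)

/-- The partial f-value `f_{y∼x|Z} = R_{y∼x|Z}/√(1 − R²_{y∼x|Z})`. -/
def fp (y x : H) (Z : Submodule ℝ H) [HasOrthogonalProjection Z] : ℝ :=
  Rp y x Z / Real.sqrt (1 - Rp y x Z ^ 2)

/-- The regression estimand `β_{y∼d|M} = ⟪y^{⊥M}, d^{⊥M}⟫/‖d^{⊥M}‖²`. -/
def betaReg (y d : H) (M : Submodule ℝ H) [HasOrthogonalProjection M] : ℝ :=
  ⟪resid M y, resid M d⟫ / ‖resid M d‖ ^ 2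

/-- `σ_{y∼M} = ‖y^{⊥M}‖`. -/
def sigv (y : H) (M : Submodule ℝ H) [HasOrthogonalProjection M] : ℝ :=
  ‖resid M y‖

/-- The orthogonal projection onto `M` as a map `H →L[ℝ] H`. -/
def projL (M : Submodule ℝ H) [HasOrthogonalProjection M] : H →L[ℝ] H :=
  M.subtypeL.comp (orthogonalProjection M)

/-- The projection off `M`, `Q_M = id − P_M`, as a map `H →L[ℝ] H`. -/
def residL (M : Submodule ℝ H) [HasOrthogonalProjection M] : H →L[ℝ] H :=
  ContinuousLinearMap.id ℝ H - projL M

/-- `R²_{y∼X|Z} = R²_{y^{⊥Z}∼X^{⊥Z}}`. -/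
theorem partial_R2_eq_R2_of_residuals [CompleteSpace H]
    (X Z : Submodule ℝ H) [CompleteSpace X] [CompleteSpace Z]
    [CompleteSpace ↥(X ⊔ Z)] [CompleteSpace ↥(X.map (residL Z).toLinearMap)]
    (y : H) (hy : resid Z y ≠ 0) :
    R2p y X Z = 1 - ‖resid (X.map (residL Z).toLinearMap) (resid Z y)‖ ^ 2 / ‖resid Z y‖ ^ 2 := by
  set W := X.map (residL Z).toLinearMap with hW
  have hWZ : W ≤ Zᗮ := by
    rintro _ ⟨x, hx, rfl⟩
    simp only [residL, projL, ContinuousLinearMap.sub_apply, ContinuousLinearMap.id_apply, ContinuousLinearMap.comp_apply, Submodule.subtypeL_apply] at *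
    exact sub_starProjection_mem_orthogonal (K := Z) x
  have hZW : Z ≤ Wᗮ := fun z hz w hw => by
    rw [real_inner_comm]; exact hWZ hw z hz
  -- resid (X ⊔ Z) y = y - P_Z y - P_W y
  have hsum : ((orthogonalProjection (X ⊔ Z) y : H))
      = (orthogonalProjection W y : H) + (orthogonalProjection Z y : H) := by
    apply eq_starProjection_of_mem_of_inner_eq_zero (K := X ⊔ Z)
    · refine Submodule.add_mem _ ?_ (Submodule.mem_sup_right (orthogonalProjection Z y).2)
      obtain ⟨x, hx, hxe⟩ := (orthogonalProjection W y).2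
      have : (orthogonalProjection W y : H)
          = x - (orthogonalProjection Z x : H) := by
        rw [← hxe]; simp [residL, projL]
      rw [this]
      exact Submodule.sub_mem _ (Submodule.mem_sup_left hx)
        (Submodule.mem_sup_right (orthogonalProjection Z x).2)
    · intro w hw
      rw [Submodule.mem_sup] at hw
      obtain ⟨a, ha, b, hb, rfl⟩ := hw
      have ha' : (residL Z) a ∈ W := ⟨a, ha, rfl⟩
      have key : y - ((orthogonalProjection W y : H) + (orthogonalProjection Z y : H))
          = (y - orthogonalProjection W y) - orthogonalProjection Z y := by abel
      rw [key, inner_add_right]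
      have h1 : ⟪(y - (orthogonalProjection W y : H)) - (orthogonalProjection Z y : H), a⟫ = 0 := by
        have haz : a = (residL Z a) + (orthogonalProjection Z a : H) := by
          simp [residL, projL]
        rw [haz, inner_add_right, inner_sub_left, inner_sub_left]
        have e1 : ⟪y - (orthogonalProjection W y : H), (residL Z a : H)⟫ = 0 := by
          rw [real_inner_comm]
          exact (sub_starProjection_mem_orthogonal (K := W) y) _ ha'
        have e2 : ⟪(orthogonalProjection Z y : H), (residL Z a : H)⟫ = 0 :=
          hWZ ha' _ (orthogonalProjection Z y).2
        have e3 : ⟪(y : H), (orthogonalProjection Z a : H)⟫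
            - ⟪(orthogonalProjection Z y : H), (orthogonalProjection Z a : H)⟫ = 0 := by
          rw [← inner_sub_left, real_inner_comm]
          exact (sub_starProjection_mem_orthogonal (K := Z) y) _
            (orthogonalProjection Z a).2
        have e4 : ⟪(orthogonalProjection W y : H), (orthogonalProjection Z a : H)⟫ = 0 :=
          hZW (orthogonalProjection Z a).2 _ (orthogonalProjection W y).2
        simp only [inner_sub_left] at e1 ⊢
        linarith
      have h2 : ⟪(y - (orthogonalProjection W y : H)) - (orthogonalProjection Z y : H), b⟫ = 0 := by
        rw [inner_sub_left, inner_sub_left]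
        have e1 : ⟪(y : H), b⟫ - ⟪(orthogonalProjection Z y : H), b⟫ = 0 := by
          rw [← inner_sub_left, real_inner_comm]
          exact (sub_starProjection_mem_orthogonal (K := Z) y) _ hb
        have e2 : ⟪(orthogonalProjection W y : H), b⟫ = 0 :=
          hZW hb _ (orthogonalProjection W y).2
        linarith
      rw [h1, h2, add_zero]
  have hresid : resid (X ⊔ Z) y = resid W (resid Z y) := by
    have hPW : (orthogonalProjection W (resid Z y) : H) = (orthogonalProjection W y : H) := by
      have : orthogonalProjection W (orthogonalProjection Z y : H) = 0 :=
        Submodule.orthogonalProjectionOnto_apply_of_mem_orthogonal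
          (hZW (orthogonalProjection Z y).2)
      rw [resid, map_sub, this]
      simp
    rw [resid] at hPW
    rw [resid, resid, resid, hsum, hPW]
    abel
  have hyne : y ≠ 0 := fun h => hy (by simp [resid, h])
  have hy2 : ‖y‖ ^ 2 ≠ 0 := pow_ne_zero _ (norm_ne_zero_iff.mpr hyne)
  have hz2 : ‖resid Z y‖ ^ 2 ≠ 0 := pow_ne_zero _ (norm_ne_zero_iff.mpr hy)
  rw [R2p, R2, R2, hresid]
  field_simp
  have hWn : ‖resid W (resid Z y)‖ = ‖resid (X.map (residL Z).toLinearMap) (resid Z y)‖ := rfl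
  rw [hWn]
  ring
end
end

section
/- Let H be a real Hilbert space, Z a complete subspace, and y, x ∈ H with y^{⊥Z} ≠ 0 and x^{⊥Z} ≠ 0. Then the partial R²-value of y on the span of x given Z equals the square of the partial R-value: R²_{y∼span(x)|Z} = (R_{y∼x|Z})², where R_{y∼x|Z} = ⟨y^{⊥Z}, x^{⊥Z}⟩/(‖y^{⊥Z}‖·‖x^{⊥Z}‖). -/
/-!
R²-calculus in real Hilbert spaces (Freidling & Zhao, "Optimization-based
Sensitivity Analysis for Unmeasured Confounding using Partial Correlations").
-/

noncomputable section

open Submodule RealInnerProductSpace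

variable {H : Type*} [NormedAddCommGroup H] [InnerProductSpace ℝ H]

theorem key [CompleteSpace H] (Z : Submodule ℝ H) [CompleteSpace Z] (y x : H)
    [CompleteSpace ↥((ℝ ∙ x) ⊔ Z)] (hx : resid Z x ≠ 0) :
    (orthogonalProjection ((ℝ ∙ x) ⊔ Z) y : H)
      = (orthogonalProjection Z y : H)
        + (⟪resid Z y, resid Z x⟫ / ‖resid Z x‖ ^ 2) • resid Z x := by
  set u := resid Z y
  set v := resid Z x
  set c : ℝ := ⟪u, v⟫ / ‖v‖ ^ 2
  rw [← starProjection_apply ((ℝ ∙ x) ⊔ Z)]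
  apply eq_starProjection_of_mem_of_inner_eq_zero
  · apply Submodule.add_mem
    · exact Submodule.mem_sup_right (orthogonalProjection Z y).2
    · apply Submodule.smul_mem
      have : v = x - (orthogonalProjection Z x : H) := rfl
      rw [this]
      exact Submodule.sub_mem _ (Submodule.mem_sup_left (mem_span_singleton_self x))
        (Submodule.mem_sup_right (orthogonalProjection Z x).2)
  · intro w hw
    have huZ : u ∈ Zᗮ := sub_starProjection_mem_orthogonal y
    have hvZ : v ∈ Zᗮ := sub_starProjection_mem_orthogonal x
    have hyd : y - ((orthogonalProjection Z y : H) + c • v) = u - c • v := by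
      simp [u, resid]; abel
    rw [hyd]
    rcases Submodule.mem_sup.1 hw with ⟨a, ha, z, hz, rfl⟩
    rcases mem_span_singleton.1 ha with ⟨t, rfl⟩
    have hxv : x = v + (orthogonalProjection Z x : H) := by simp [v, resid]
    have huZ' := (Submodule.mem_orthogonal' Z u).1 huZ
    have hvZ' := (Submodule.mem_orthogonal' Z v).1 hvZ
    have h1 : ∀ w ∈ Z, ⟪u - c • v, w⟫ = 0 := fun w hw' => by
      rw [inner_sub_left, huZ' w hw', inner_smul_left, hvZ' w hw']; ring
    have h2 : ⟪u - c • v, v⟫ = 0 := by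
      rw [inner_sub_left, inner_smul_left, real_inner_self_eq_norm_sq]
      have hv2 : ‖v‖ ^ 2 ≠ 0 := pow_ne_zero _ (norm_ne_zero_iff.2 hx)
      simp only [c, conj_trivial]
      field_simp [c]
      ring
    have h3 : ⟪u - c • v, x⟫ = 0 := by
      rw [hxv, inner_add_right, h2, h1 _ (orthogonalProjection Z x).2]; ring
    rw [inner_add_right, inner_smul_right, h3, h1 z hz]; ring

/-- the partial R²-value of `y` on `span x` given `Z` equals the square of
the partial R-value. -/
theorem partial_R2_span_eq_sq_partial_R [CompleteSpace H]
    (Z : Submodule ℝ H) [CompleteSpace Z] (y x : H)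
    [CompleteSpace ↥((ℝ ∙ x) ⊔ Z)]
    (hy : resid Z y ≠ 0) (hx : resid Z x ≠ 0) :
    R2p y (ℝ ∙ x) Z = Rp y x Z ^ 2 := by
  set u := resid Z y with hu
  set v := resid Z x with hv
  have hy0 : y ≠ 0 := by rintro rfl; apply hy; simp [hu, resid]
  have hyn : ‖y‖ ≠ 0 := norm_ne_zero_iff.2 hy0
  have hun : ‖u‖ ≠ 0 := norm_ne_zero_iff.2 hy
  have hvn : ‖v‖ ≠ 0 := norm_ne_zero_iff.2 hx
  have hw : resid ((ℝ ∙ x) ⊔ Z) y = u - (⟪u, v⟫ / ‖v‖ ^ 2) • v := by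
    rw [resid, key Z y x hx]
    rw [hu, resid]; abel
  have hnormw : ‖resid ((ℝ ∙ x) ⊔ Z) y‖ ^ 2 = ‖u‖ ^ 2 - ⟪u, v⟫ ^ 2 / ‖v‖ ^ 2 := by
    rw [hw, norm_sub_sq_real, real_inner_smul_right, norm_smul, Real.norm_eq_abs,
      abs_div, abs_of_nonneg (sq_nonneg ‖v‖), mul_pow, div_pow, sq_abs]
    field_simp
    ring
  rw [R2p, Rp]
  have hd : 1 - R2 y Z = ‖u‖ ^ 2 / ‖y‖ ^ 2 := by rw [R2]; ring
  have hnum : R2 y ((ℝ ∙ x) ⊔ Z) - R2 y Z = ⟪u, v⟫ ^ 2 / ‖v‖ ^ 2 / ‖y‖ ^ 2 := by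
    rw [R2, R2, hnormw]
    field_simp
    simp only [← hu]
    ring
  rw [hnum, hd]
  simp only [← hu, ← hv]
  field_simp
end
end

section
/- Let H be a real Hilbert space and let X, Y be complete subspaces of H such that X + Y and Y^{⊥X} are complete. Then the orthogonal projections satisfy P_{X+Y} = P_X + P_{Y^{⊥X}}, and, writing Q_M := id − P_M for the projection off a complete subspace M, Q_{X+Y} = Q_X ∘ Q_{Y^{⊥X}} = Q_{Y^{⊥X}} ∘ Q_X. -/
/-!
R²-calculus in real Hilbert spaces (Freidling & Zhao, "Optimization-based
Sensitivity Analysis for Unmeasured Confounding using Partial Correlations").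
-/

noncomputable section

open Submodule RealInnerProductSpace

variable {H : Type*} [NormedAddCommGroup H] [InnerProductSpace ℝ H]

lemma projL_apply (M : Submodule ℝ H) [HasOrthogonalProjection M] (h : H) :
    projL M h = (orthogonalProjection M h : H) := rfl

lemma residL_apply (M : Submodule ℝ H) [HasOrthogonalProjection M] (h : H) :
    residL M h = h - (orthogonalProjection M h : H) := rfl

lemma projL_mem (M : Submodule ℝ H) [HasOrthogonalProjection M] (h : H) :
    projL M h ∈ M := (orthogonalProjection M h).2

lemma projL_eq_of_mem_orthogonal (M : Submodule ℝ H) [HasOrthogonalProjection M]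
    {h : H} (hh : h ∈ Mᗮ) : projL M h = 0 := by
  simpa [projL_apply] using
    congrArg (Subtype.val) (orthogonalProjection_mem_subspace_orthogonalComplement_eq_zero hh)

lemma residL_sub_mem (M : Submodule ℝ H) [HasOrthogonalProjection M] (h : H) :
    residL M h ∈ Mᗮ := by
  simpa [residL_apply] using sub_orthogonalProjection_mem_orthogonal (K := M) h

/-- `P_{X+Y} = P_X + P_{Y^{⊥X}}` and
`Q_{X+Y} = Q_X ∘ Q_{Y^{⊥X}} = Q_{Y^{⊥X}} ∘ Q_X`. -/
theorem projection_sup_eq_add_projection [CompleteSpace H]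
    (X Y : Submodule ℝ H) [CompleteSpace X] [CompleteSpace Y]
    [CompleteSpace ↥(X ⊔ Y)] [CompleteSpace ↥(Y.map (residL X).toLinearMap)] :
    projL (X ⊔ Y) = projL X + projL (Y.map (residL X).toLinearMap) ∧
    residL (X ⊔ Y) = (residL X).comp (residL (Y.map (residL X).toLinearMap)) ∧
    residL (X ⊔ Y) = (residL (Y.map (residL X).toLinearMap)).comp (residL X) := by
  set Y' := Y.map (residL X).toLinearMap with hY'
  have hY'le : Y' ≤ Xᗮ := by
    rintro _ ⟨y, hy, rfl⟩
    exact residL_sub_mem X y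
  have hXle : X ≤ Y'ᗮ := fun x hx v hv => by
    rw [inner_eq_zero_symm]; exact hY'le hv x hx
  have hPXY' : ∀ h : H, projL X (projL Y' h) = 0 := fun h =>
    projL_eq_of_mem_orthogonal X (hY'le (projL_mem Y' h))
  have hPY'X : ∀ h : H, projL Y' (projL X h) = 0 := fun h =>
    projL_eq_of_mem_orthogonal Y' (hXle (projL_mem X h))
  have hsup : X ⊔ Y = X ⊔ Y' := by
    apply le_antisymm
    · apply sup_le le_sup_left
      intro y hy
      have : y = projL X y + residL X y := by simp [residL_apply, projL_apply]
      rw [this]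
      exact add_mem (le_sup_left (b := Y') (projL_mem X y))
        (le_sup_right (a := X) ⟨y, hy, rfl⟩)
    · apply sup_le le_sup_left
      rintro _ ⟨y, hy, rfl⟩
      exact sub_mem (le_sup_right (a := X) hy) (le_sup_left (b := Y) (projL_mem X y))
  have hmain : projL (X ⊔ Y) = projL X + projL Y' := by
    ext h
    have hv : projL X h + projL Y' h ∈ X ⊔ Y := by
      rw [hsup]
      exact add_mem (le_sup_left (b := Y') (projL_mem X h))
        (le_sup_right (a := X) (projL_mem Y' h))
    have hr : h - (projL X h + projL Y' h) ∈ (X ⊔ Y)ᗮ := by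
      rw [hsup, ← Submodule.inf_orthogonal]
      constructor
      · have h1 := residL_sub_mem X h
        have h2 : projL Y' h ∈ Xᗮ := hY'le (projL_mem Y' h)
        have := sub_mem h1 h2
        simpa [residL_apply, projL_apply, sub_add_eq_sub_sub] using this
      · have h1 := residL_sub_mem Y' h
        have h2 : projL X h ∈ Y'ᗮ := hXle (projL_mem X h)
        have := sub_mem h1 h2
        have heq : residL Y' h - projL X h = h - (projL X h + projL Y' h) := by
          simp [residL_apply, projL_apply]; abel
        rwa [heq] at this
    have := Submodule.eq_starProjection_of_mem_orthogonal (K := X ⊔ Y) hv hr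
    simpa [projL_apply] using this
  have hres : ∀ (M : Submodule ℝ H) [HasOrthogonalProjection M] (h : H),
      residL M h = h - projL M h := fun M _ h => rfl
  refine ⟨hmain, ?_, ?_⟩
  · ext h
    simp only [ContinuousLinearMap.comp_apply, hres, hmain,
      ContinuousLinearMap.add_apply, map_sub, hPXY' h]
    erw [hPXY' h]
    abel
  · ext h
    simp only [ContinuousLinearMap.comp_apply, hres, hmain,
      ContinuousLinearMap.add_apply, map_sub, hPY'X h]
    erw [hPY'X h]
    abel
end
end

section
/- Orthogonal additivity of partial R²-values: let H be a real Hilbert space, let Z be a complete subspace, let X and W be complete subspaces with X + Z, W + Z and X + W + Z complete, and let y ∈ H with y^{⊥Z} ≠ 0. If X^{⊥Z} ⊥ W^{⊥Z} (i.e. ⟨x^{⊥Z}, w^{⊥Z}⟩ = 0 for all x ∈ X, w ∈ W), then R²_{y∼X+W|Z} = R²_{y∼X|Z} + R²_{y∼W|Z}. -/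
/-!
R²-calculus in real Hilbert spaces (Freidling & Zhao, "Optimization-based
Sensitivity Analysis for Unmeasured Confounding using Partial Correlations").
-/

noncomputable section

open Submodule RealInnerProductSpace

variable {H : Type*} [NormedAddCommGroup H] [InnerProductSpace ℝ H]

lemma resid_mem_orthogonal (M : Submodule ℝ H) [HasOrthogonalProjection M] (y : H) :
    resid M y ∈ Mᗮ := sub_starProjection_mem_orthogonal y

lemma resid_inner_eq_zero (M : Submodule ℝ H) [HasOrthogonalProjection M]
    (y : H) {v : H} (hv : v ∈ M) : ⟪resid M y, v⟫ = 0 :=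
  (Submodule.mem_orthogonal' M _).mp (resid_mem_orthogonal M y) v hv

lemma resid_eq_self (M : Submodule ℝ H) [HasOrthogonalProjection M]
    {q : H} (hq : q ∈ Mᗮ) : resid M q = q := by
  simp [resid, orthogonalProjectionOnto_apply_of_mem_orthogonal hq]

lemma resid_eq_zero (M : Submodule ℝ H) [HasOrthogonalProjection M]
    {z : H} (hz : z ∈ M) : resid M z = 0 := by
  simp [resid, starProjection_eq_self_iff.mpr hz]

lemma resid_add (M : Submodule ℝ H) [HasOrthogonalProjection M] (a b : H) :
    resid M (a + b) = resid M a + resid M b := by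
  simp only [resid, map_add]; push_cast; abel

/-- Key decomposition lemma: for `Z ≤ M`, write `resid Z y = resid M y + q`. -/
lemma q_spec (Z M : Submodule ℝ H) [HasOrthogonalProjection Z]
    [HasOrthogonalProjection M] (hZM : Z ≤ M) (y : H) :
    (resid Z y - resid M y) ∈ M ∧ (resid Z y - resid M y) ∈ Zᗮ ∧
    ‖resid Z y‖ ^ 2 = ‖resid M y‖ ^ 2 + ‖resid Z y - resid M y‖ ^ 2 := by
  have hmem : resid Z y - resid M y ∈ M := by
    have : resid Z y - resid M y
        = (orthogonalProjection M y : H) - (orthogonalProjection Z y : H) := by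
      simp only [resid]; abel
    rw [this]
    exact M.sub_mem (orthogonalProjection M y).2 (hZM (orthogonalProjection Z y).2)
  refine ⟨hmem, ?_, ?_⟩
  · intro u hu
    have h1 := resid_inner_eq_zero Z y hu
    have h2 := resid_inner_eq_zero M y (hZM hu)
    rw [real_inner_comm] at h1 h2
    simp [inner_sub_right, h1, h2]
  · have hio : ⟪resid M y, resid Z y - resid M y⟫ = 0 :=
      resid_inner_eq_zero M y hmem
    calc ‖resid Z y‖ ^ 2 = ‖resid M y + (resid Z y - resid M y)‖ ^ 2 := by
          rw [add_sub_cancel]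
      _ = ‖resid M y‖ ^ 2 + ‖resid Z y - resid M y‖ ^ 2 := by
          rw [norm_add_sq_real, hio]; ring

/-- Each `q = resid Z y - resid (M ⊔ Z) y` has the form `resid Z m` with `m ∈ M`. -/
lemma q_form (Z M : Submodule ℝ H) [HasOrthogonalProjection Z]
    [HasOrthogonalProjection (M ⊔ Z)] (y : H) :
    ∃ m ∈ M, resid Z y - resid (M ⊔ Z) y = resid Z m := by
  obtain ⟨hmem, hperp, -⟩ := q_spec Z (M ⊔ Z) le_sup_right y
  obtain ⟨m, hm, z, hz, hmz⟩ := Submodule.mem_sup.mp hmem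
  refine ⟨m, hm, ?_⟩
  rw [← resid_eq_self Z hperp, ← hmz, resid_add, resid_eq_zero Z hz, add_zero]

/-- orthogonal additivity of partial R²-values. -/
theorem partial_R2_orthogonal_additivity [CompleteSpace H]
    (Z X W : Submodule ℝ H) [CompleteSpace Z] [CompleteSpace X] [CompleteSpace W]
    [CompleteSpace ↥(X ⊔ Z)] [CompleteSpace ↥(W ⊔ Z)] [CompleteSpace ↥(X ⊔ W ⊔ Z)]
    (y : H) (hy : resid Z y ≠ 0)
    (horth : ∀ x ∈ X, ∀ w ∈ W, ⟪resid Z x, resid Z w⟫ = 0) :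
    R2p y (X ⊔ W) Z = R2p y X Z + R2p y W Z := by
  have hy0 : y ≠ 0 := by rintro rfl; exact hy (by simp [resid])
  obtain ⟨hqXmem, hqXperp, hpyX⟩ := q_spec Z (X ⊔ Z) le_sup_right y
  obtain ⟨hqWmem, hqWperp, hpyW⟩ := q_spec Z (W ⊔ Z) le_sup_right y
  obtain ⟨-, -, hpyS⟩ := q_spec Z (X ⊔ W ⊔ Z) le_sup_right y
  obtain ⟨x, hx, hqX⟩ := q_form Z X y
  obtain ⟨w, hw, hqW⟩ := q_form Z W y
  set qX := resid Z y - resid (X ⊔ Z) y with hqXdef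
  set qW := resid Z y - resid (W ⊔ Z) y with hqWdef
  have hinner : ⟪qX, qW⟫ = 0 := by rw [hqX, hqW]; exact horth x hx w hw
  -- the residual w.r.t. the big space
  have hkey : resid (X ⊔ W ⊔ Z) y = resid Z y - qX - qW := by
    have hproj : (orthogonalProjection (X ⊔ W ⊔ Z) y : H)
        = (orthogonalProjection Z y : H) + qX + qW := by
      apply eq_starProjection_of_mem_of_inner_eq_zero
      · have h1 : (X ⊔ Z : Submodule ℝ H) ≤ X ⊔ W ⊔ Z :=
          sup_le (le_sup_of_le_left le_sup_left) le_sup_right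
        have h2 : (W ⊔ Z : Submodule ℝ H) ≤ X ⊔ W ⊔ Z :=
          sup_le (le_sup_of_le_left le_sup_right) le_sup_right
        exact add_mem (add_mem ((le_sup_right : Z ≤ X ⊔ W ⊔ Z) (orthogonalProjection Z y).2) (h1 hqXmem))
          (h2 hqWmem)
      · intro v hv
        have he : y - ((orthogonalProjection Z y : H) + qX + qW)
            = resid Z y - qX - qW := by simp only [resid]; abel
        rw [he]
        -- inner with elements of X, W, Z separately
        have hZcase : ∀ z ∈ Z, ⟪resid Z y - qX - qW, z⟫ = 0 := by
          intro z hz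
          have e1 := resid_inner_eq_zero Z y hz
          have e2 : ⟪qX, z⟫ = 0 := by
            rw [hqX]; exact resid_inner_eq_zero Z x hz
          have e3 : ⟪qW, z⟫ = 0 := by
            rw [hqW]; exact resid_inner_eq_zero Z w hz
          simp [inner_sub_left, e1, e2, e3]
        have hqW_perp : ∀ a ∈ X, ⟪qW, a⟫ = 0 := by
          intro a ha
          have hsplit : a = resid Z a + (orthogonalProjection Z a : H) := by
            simp [resid]
          rw [hsplit, inner_add_right]
          have e1 : ⟪qW, resid Z a⟫ = 0 := by
            rw [hqW, real_inner_comm]; exact horth a ha w hw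
          have e2 : ⟪qW, (orthogonalProjection Z a : H)⟫ = 0 := by
            rw [hqW]; exact resid_inner_eq_zero Z w (orthogonalProjection Z a).2
          rw [e1, e2]; ring
        have hqX_perp : ∀ b ∈ W, ⟪qX, b⟫ = 0 := by
          intro b hb
          have hsplit : b = resid Z b + (orthogonalProjection Z b : H) := by
            simp [resid]
          rw [hsplit, inner_add_right]
          have e1 : ⟪qX, resid Z b⟫ = 0 := by
            rw [hqX]; exact horth x hx b hb
          have e2 : ⟪qX, (orthogonalProjection Z b : H)⟫ = 0 := by
            rw [hqX]; exact resid_inner_eq_zero Z x (orthogonalProjection Z b).2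
          rw [e1, e2]; ring
        have hXcase : ∀ a ∈ X, ⟪resid Z y - qX - qW, a⟫ = 0 := by
          intro a ha
          have h1 : resid Z y - qX - qW = resid (X ⊔ Z) y - qW := by
            rw [hqXdef]; abel
          rw [h1, inner_sub_left, resid_inner_eq_zero (X ⊔ Z) y (le_sup_left (α := Submodule ℝ H) ha),
            hqW_perp a ha]; ring
        have hWcase : ∀ b ∈ W, ⟪resid Z y - qX - qW, b⟫ = 0 := by
          intro b hb
          have h1 : resid Z y - qX - qW = resid (W ⊔ Z) y - qX := by
            rw [hqWdef]; abel
          rw [h1, inner_sub_left, resid_inner_eq_zero (W ⊔ Z) y (le_sup_left (α := Submodule ℝ H) hb),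
            hqX_perp b hb]; ring
        obtain ⟨u, hu, z, hz, huz⟩ := Submodule.mem_sup.mp hv
        obtain ⟨a, ha, b, hb, hab⟩ := Submodule.mem_sup.mp hu
        rw [← huz, ← hab, inner_add_right, inner_add_right,
          hXcase a ha, hWcase b hb, hZcase z hz]; ring
    simp only [resid, hproj]; abel
  -- Pythagoras for the pair (qX, qW)
  have hsum : ‖resid Z y - resid (X ⊔ W ⊔ Z) y‖ ^ 2 = ‖qX‖ ^ 2 + ‖qW‖ ^ 2 := by
    have h1 : resid Z y - resid (X ⊔ W ⊔ Z) y = qX + qW := by rw [hkey]; abel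
    rw [h1, norm_add_sq_real, hinner]; ring
  rw [hsum] at hpyS
  -- now pure arithmetic
  have hny : (‖y‖ : ℝ) ^ 2 ≠ 0 := pow_ne_zero _ (norm_ne_zero_iff.mpr hy0)
  have hR : (‖resid Z y‖ : ℝ) ^ 2 ≠ 0 := pow_ne_zero _ (norm_ne_zero_iff.mpr hy)
  have hterm : ∀ (M : Submodule ℝ H) [HasOrthogonalProjection (M ⊔ Z)],
      R2p y M Z = (‖resid Z y‖ ^ 2 - ‖resid (M ⊔ Z) y‖ ^ 2) / ‖resid Z y‖ ^ 2 := by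
    intro M _
    simp only [R2p, R2]
    field_simp
    ring
  rw [hterm (X ⊔ W), hterm X, hterm W, ← add_div]
  congr 1
  linarith
end
end

section
/- Decomposition of unexplained variance: let H be a real Hilbert space, let Z, X, W be complete subspaces with all relevant sums of subspaces complete, and let y ∈ H with y^{⊥Z} ≠ 0 and y^{⊥X+Z} ≠ 0. Then 1 − R²_{y∼X+W|Z} = (1 − R²_{y∼X|Z})·(1 − R²_{y∼W|X+Z}). -/
/-!
R²-calculus in real Hilbert spaces (Freidling & Zhao, "Optimization-based
Sensitivity Analysis for Unmeasured Confounding using Partial Correlations").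
-/

noncomputable section

open Submodule RealInnerProductSpace

variable {H : Type*} [NormedAddCommGroup H] [InnerProductSpace ℝ H]

lemma resid_congr {M N : Submodule ℝ H} [HasOrthogonalProjection M]
    [HasOrthogonalProjection N] (h : M = N) (y : H) : resid M y = resid N y := by
  subst h; rfl

/-- decomposition of unexplained variance:
`1 − R²_{y∼X+W|Z} = (1 − R²_{y∼X|Z})·(1 − R²_{y∼W|X+Z})`. -/
theorem partial_R2_decomposition [CompleteSpace H]
    (Z X W : Submodule ℝ H) [CompleteSpace Z] [CompleteSpace X] [CompleteSpace W]
    [CompleteSpace ↥(X ⊔ Z)] [CompleteSpace ↥(X ⊔ W ⊔ Z)] [CompleteSpace ↥(W ⊔ (X ⊔ Z))]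
    (y : H) (hy : resid Z y ≠ 0) (hy2 : resid (X ⊔ Z) y ≠ 0) :
    1 - R2p y (X ⊔ W) Z = (1 - R2p y X Z) * (1 - R2p y W (X ⊔ Z)) := by
  have hsup : X ⊔ W ⊔ Z = W ⊔ (X ⊔ Z) := by
    rw [sup_comm X W, sup_assoc]
  have hyne : y ≠ 0 := by
    rintro rfl
    simp [resid] at hy
  have hy0 : ‖y‖ ≠ 0 := norm_ne_zero_iff.mpr hyne
  have hZ0 : ‖resid Z y‖ ≠ 0 := norm_ne_zero_iff.mpr hy
  have hXZ0 : ‖resid (X ⊔ Z) y‖ ≠ 0 := norm_ne_zero_iff.mpr hy2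
  have key : resid (X ⊔ W ⊔ Z) y = resid (W ⊔ (X ⊔ Z)) y := resid_congr hsup y
  simp only [R2p, R2]
  rw [key]
  field_simp
  ring
end
end

section
/- Reduction of partial correlation: let H be a real Hilbert space, Z a complete subspace, W a complete subspace with W + Z complete, and y, x ∈ H with y^{⊥Z} ≠ 0, x^{⊥Z} ≠ 0, and x^{⊥W+Z} ≠ 0. If y^{⊥Z} ⊥ W^{⊥Z} (i.e. ⟨y^{⊥Z}, w^{⊥Z}⟩ = 0 for all w ∈ W), then R_{y∼x|W+Z} = R_{y∼x|Z}/√(1 − R²_{x∼W|Z}), where R²_{x∼W|Z} is the partial R²-value of x on W given Z. -/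
/-!
R²-calculus in real Hilbert spaces (Freidling & Zhao, "Optimization-based
Sensitivity Analysis for Unmeasured Confounding using Partial Correlations").
-/

noncomputable section

open Submodule RealInnerProductSpace

variable {H : Type*} [NormedAddCommGroup H] [InnerProductSpace ℝ H]

/-- reduction of partial correlation. -/
theorem partial_R_reduction [CompleteSpace H]
    (Z W : Submodule ℝ H) [CompleteSpace Z] [CompleteSpace W] [CompleteSpace ↥(W ⊔ Z)]
    (y x : H)
    (hy : resid Z y ≠ 0) (hx : resid Z x ≠ 0) (hx2 : resid (W ⊔ Z) x ≠ 0)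
    (horth : ∀ w ∈ W, ⟪resid Z y, resid Z w⟫ = 0) :
    Rp y x (W ⊔ Z) = Rp y x Z / Real.sqrt (1 - R2p x W Z) := by
  have hyZ : resid Z y ∈ Zᗮ := sub_starProjection_mem_orthogonal (K := Z) y
  have hperp : ∀ v ∈ W ⊔ Z, ⟪resid Z y, v⟫ = 0 := by
    intro v hv
    obtain ⟨w, hw, z, hz, rfl⟩ := Submodule.mem_sup.mp hv
    have hz0 : ⟪resid Z y, z⟫ = 0 := by
      rw [real_inner_comm]; exact hyZ z hz
    have hpw : ⟪resid Z y, (orthogonalProjection Z w : H)⟫ = 0 := by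
      rw [real_inner_comm]; exact hyZ _ (orthogonalProjection Z w).2
    have hw0 : ⟪resid Z y, w⟫ = 0 := by
      have h := horth w hw
      rw [show resid Z w = w - (orthogonalProjection Z w : H) from rfl,
        inner_sub_right, hpw, sub_zero] at h
      exact h
    rw [inner_add_right, hw0, hz0, add_zero]
  have hres : resid (W ⊔ Z) y = resid Z y := by
    unfold resid
    have he : ((orthogonalProjection (W ⊔ Z)) y : H) = ((orthogonalProjection Z) y : H) :=
      eq_starProjection_of_mem_orthogonal
        (le_sup_right (α := Submodule ℝ H) (orthogonalProjection Z y).2)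
        ((Submodule.mem_orthogonal' _ _).mpr hperp)
    rw [he]
  have h1 : ⟪resid Z y, resid (W ⊔ Z) x⟫ = ⟪resid Z y, x⟫ := by
    rw [show resid (W ⊔ Z) x = x - (orthogonalProjection (W ⊔ Z) x : H) from rfl,
      inner_sub_right, hperp _ (orthogonalProjection (W ⊔ Z) x).2, sub_zero]
  have h2 : ⟪resid Z y, resid Z x⟫ = ⟪resid Z y, x⟫ := by
    have h0 : ⟪(orthogonalProjection Z x : H), resid Z y⟫ = 0 :=
      hyZ _ (orthogonalProjection Z x).2
    rw [real_inner_comm] at h0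
    rw [show resid Z x = x - (orthogonalProjection Z x : H) from rfl,
      inner_sub_right, h0, sub_zero]
  have hx0 : x ≠ 0 := by
    rintro rfl
    simp [resid] at hx
  set a := ‖resid Z x‖ with ha
  set b := ‖resid (W ⊔ Z) x‖ with hb
  set c := ‖x‖ with hc
  set m := ‖resid Z y‖ with hm
  have ha0 : a ≠ 0 := norm_ne_zero_iff.mpr hx
  have hb0 : b ≠ 0 := norm_ne_zero_iff.mpr hx2
  have hc0 : c ≠ 0 := norm_ne_zero_iff.mpr hx0
  have hm0 : m ≠ 0 := norm_ne_zero_iff.mpr hy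
  have hR2p : 1 - R2p x W Z = b ^ 2 / a ^ 2 := by
    unfold R2p R2
    rw [← ha, ← hb, ← hc]
    field_simp
    ring
  rw [hR2p]
  have hsq : Real.sqrt (b ^ 2 / a ^ 2) = b / a := by
    rw [← div_pow, Real.sqrt_sq (div_nonneg (norm_nonneg _) (norm_nonneg _))]
  rw [hsq]
  unfold Rp
  rw [hres, h1, h2, ← ha, ← hb, ← hm]
  field_simp
end
end

section
/- Bias of the OLS estimand under a single unmeasured confounder (Proposition 1): let H be a real Hilbert space, W a complete subspace (representing the span of the observed covariates X and instrument Z), and y, d, u ∈ H such that d^{⊥W} ≠ 0, u^{⊥W} ≠ 0, d^{⊥W+span(u)} ≠ 0, y^{⊥W+span(d)} ≠ 0, and u^{⊥W+span(d)} ≠ 0. Then β_{y∼d|W+span(u)} = β_{y∼d|W} − R_{y∼u|W+span(d)}·f_{d∼u|W}·σ_{y∼W+span(d)}/σ_{d∼W}, where β_{y∼d|M} := ⟨y^{⊥M}, d^{⊥M}⟩/‖d^{⊥M}‖². -/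
/-!
R²-calculus in real Hilbert spaces (Freidling & Zhao, "Optimization-based
Sensitivity Analysis for Unmeasured Confounding using Partial Correlations").
-/

noncomputable section

open Submodule RealInnerProductSpace

variable {H : Type*} [NormedAddCommGroup H] [InnerProductSpace ℝ H]

lemma resid_orth (M : Submodule ℝ H) [HasOrthogonalProjection M] (h : H) {w : H} (hw : w ∈ M) :
    ⟪resid M h, w⟫ = 0 :=
  real_inner_comm w (resid M h) ▸ sub_starProjection_mem_orthogonal (K := M) h w hw

lemma resid_sup_singleton (W : Submodule ℝ H) [CompleteSpace W] (x : H)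
    [HasOrthogonalProjection (W ⊔ (ℝ ∙ x))] (h : H) :
    resid (W ⊔ (ℝ ∙ x)) h =
      resid W h - (⟪resid W h, resid W x⟫ / ‖resid W x‖ ^ 2) • resid W x := by
  set t : ℝ := ⟪resid W h, resid W x⟫ / ‖resid W x‖ ^ 2 with ht
  have hproj : (orthogonalProjection (W ⊔ (ℝ ∙ x)) h : H) =
      (orthogonalProjection W h : H) + t • resid W x := by
    apply eq_starProjection_of_mem_of_inner_eq_zero
    · apply Submodule.add_mem
      · exact Submodule.mem_sup_left (orthogonalProjection W h).2
      · apply Submodule.smul_mem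
        have : resid W x = x - (orthogonalProjection W x : H) := rfl
        rw [this]
        exact Submodule.sub_mem _ (Submodule.mem_sup_right (Submodule.mem_span_singleton_self x))
          (Submodule.mem_sup_left (orthogonalProjection W x).2)
    · intro w hw
      rcases Submodule.mem_sup.1 hw with ⟨w₀, hw₀, z, hz, rfl⟩
      rcases Submodule.mem_span_singleton.1 hz with ⟨s, rfl⟩
      have key : h - ((orthogonalProjection W h : H) + t • resid W x) =
          resid W h - t • resid W x := by
        simp [resid]; abel
      rw [key]
      have h1 : ⟪resid W h - t • resid W x, w₀⟫ = 0 := by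
        rw [inner_sub_left, inner_smul_left, resid_orth W h hw₀, resid_orth W x hw₀]
        simp
      have h2 : ⟪resid W h - t • resid W x, x⟫ = 0 := by
        have hsplit : ⟪resid W h - t • resid W x, x⟫ =
            ⟪resid W h - t • resid W x, resid W x⟫ +
              ⟪resid W h - t • resid W x, (orthogonalProjection W x : H)⟫ := by
          rw [← inner_add_right]
          congr 1
          simp [resid]
        rw [hsplit, inner_sub_left, inner_sub_left, inner_smul_left,
          inner_smul_left, resid_orth W h (orthogonalProjection W x).2,
          resid_orth W x (orthogonalProjection W x).2, ht]
        rcases eq_or_ne (resid W x) 0 with h0 | h0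
        · simp [h0]
        · have : ⟪resid W x, resid W x⟫ = ‖resid W x‖ ^ 2 := real_inner_self_eq_norm_sq _
          field_simp [this]
          rw [conj_trivial, this, div_mul_cancel₀ _ (pow_ne_zero 2 (norm_ne_zero_iff.2 h0))]
          ring
      rw [inner_add_right, h1, inner_smul_right, h2]
      simp
  show h - _ = _
  rw [hproj]
  show h - ((orthogonalProjection W h : H) + t • resid W x) = _
  simp [resid]; abel


lemma inner_expand (v w v' : H) (s t : ℝ) :
    ⟪v - s • w, v' - t • w⟫ =
      ⟪v, v'⟫ - t * ⟪v, w⟫ - s * ⟪w, v'⟫ + s * t * ⟪w, w⟫ := by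
  simp [inner_sub_left, inner_sub_right, real_inner_smul_left, real_inner_smul_right]
  ring

lemma norm_sq_expand (v w : H) (t : ℝ) :
    ‖v - t • w‖ ^ 2 = ‖v‖ ^ 2 - 2 * t * ⟪v, w⟫ + t ^ 2 * ‖w‖ ^ 2 := by
  rw [← real_inner_self_eq_norm_sq, inner_expand, real_inner_self_eq_norm_sq,
    real_inner_self_eq_norm_sq, real_inner_comm v w]
  ring

/-- bias of the OLS estimand under a single unmeasured confounder
(Proposition 1). -/
theorem ols_bias_single_confounder [CompleteSpace H]
    (W : Submodule ℝ H) [CompleteSpace W] (y d u : H)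
    [CompleteSpace ↥(W ⊔ (ℝ ∙ u))] [CompleteSpace ↥(W ⊔ (ℝ ∙ d))]
    (hd : resid W d ≠ 0) (hu : resid W u ≠ 0)
    (hd2 : resid (W ⊔ (ℝ ∙ u)) d ≠ 0)
    (hy : resid (W ⊔ (ℝ ∙ d)) y ≠ 0) (hu2 : resid (W ⊔ (ℝ ∙ d)) u ≠ 0) :
    betaReg y d (W ⊔ (ℝ ∙ u)) =
      betaReg y d W -
        Rp y u (W ⊔ (ℝ ∙ d)) * fp d u W * (sigv y (W ⊔ (ℝ ∙ d)) / sigv d W) := by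
  have hrd := resid_sup_singleton W u d
  have hry := resid_sup_singleton W u y
  have hry' := resid_sup_singleton W d y
  have hru := resid_sup_singleton W d u
  set dh := resid W d with hdh
  set yh := resid W y with hyh
  set uh := resid W u with huh
  set a : ℝ := ⟪yh, dh⟫ with ha
  set b : ℝ := ⟪yh, uh⟫ with hb
  set c : ℝ := ⟪dh, uh⟫ with hc
  set Dd : ℝ := ‖dh‖ ^ 2 with hDdDef
  set Du : ℝ := ‖uh‖ ^ 2 with hDuDef
  rw [real_inner_comm dh uh, ← hc] at hru
  have hDd : (0:ℝ) < Dd := by rw [hDdDef]; exact pow_pos (norm_pos_iff.2 hd) 2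
  have hDu : (0:ℝ) < Du := by rw [hDuDef]; exact pow_pos (norm_pos_iff.2 hu) 2
  set K : ℝ := Dd * Du - c ^ 2 with hK
  -- residual of d on W ⊔ span u
  have hnd2 : ‖dh - (c / Du) • uh‖ ^ 2 = Dd - c ^ 2 / Du := by
    rw [norm_sq_expand, ← hc, ← hDdDef, ← hDuDef]
    field_simp
    ring
  have hd2' : (0:ℝ) < Dd - c ^ 2 / Du := by
    rw [← hnd2]
    exact pow_pos (norm_pos_iff.2 (hrd ▸ hd2)) 2
  have hKpos : (0:ℝ) < K := by
    have := mul_pos hd2' hDu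
    rw [sub_mul, div_mul_cancel₀ _ hDu.ne'] at this
    linarith
  have hnu2 : ‖uh - (c / Dd) • dh‖ ^ 2 = K / Dd := by
    rw [norm_sq_expand, real_inner_comm dh uh, ← hc, ← hDdDef, ← hDuDef, hK]
    field_simp
    ring
  set sK : ℝ := Real.sqrt K with hsK
  have hsKpos : (0:ℝ) < sK := Real.sqrt_pos.2 hKpos
  have hsK2 : sK * sK = K := Real.mul_self_sqrt hKpos.le
  have hndh : Real.sqrt Dd = ‖dh‖ := by rw [hDdDef, Real.sqrt_sq (norm_nonneg _)]
  have hnuh : Real.sqrt Du = ‖uh‖ := by rw [hDuDef, Real.sqrt_sq (norm_nonneg _)]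
  -- norm of residual of u on W ⊔ span d
  have hnu : ‖uh - (c / Dd) • dh‖ = sK / ‖dh‖ := by
    rw [← Real.sqrt_sq (norm_nonneg (uh - (c / Dd) • dh)), hnu2,
      Real.sqrt_div hKpos.le, hndh]
  set σy : ℝ := ‖yh - (a / Dd) • dh‖ with hσy
  have hσypos : (0:ℝ) < σy := by
    rw [hσy]; exact norm_pos_iff.2 (hry' ▸ hy)
  have hdhpos : (0:ℝ) < ‖dh‖ := norm_pos_iff.2 hd
  have huhpos : (0:ℝ) < ‖uh‖ := norm_pos_iff.2 hu
  -- compute fp d u W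
  have hfp : fp d u W = c / sK := by
    rw [fp, Rp, ← hdh, ← huh, ← hc]
    have h1 : 1 - (c / (‖dh‖ * ‖uh‖)) ^ 2 = K / (Dd * Du) := by
      rw [hK]; field_simp [hDdDef, hDuDef]; ring
    rw [h1, Real.sqrt_div hKpos.le, Real.sqrt_mul hDd.le, hndh, hnuh, ← hsK]
    field_simp
  -- compute Rp y u (W ⊔ span d)
  have hRp : Rp y u (W ⊔ (ℝ ∙ d)) = (b - a * c / Dd) / (σy * (sK / ‖dh‖)) := by
    rw [Rp, hry', hru, ← hσy, hnu, inner_expand, ← hb, ← ha, ← hc,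
      real_inner_self_eq_norm_sq, ← hDdDef]
    congr 1
    field_simp
    ring
  have hsig1 : sigv y (W ⊔ (ℝ ∙ d)) = σy := by rw [sigv, hry']
  have hsig2 : sigv d W = ‖dh‖ := rfl
  have hbeta1 : betaReg y d W = a / Dd := by
    rw [betaReg, ← hdh, ← hyh, ← ha, ← hDdDef]
  have hbeta2 : betaReg y d (W ⊔ (ℝ ∙ u)) = (a - b * c / Du) / (Dd - c ^ 2 / Du) := by
    rw [betaReg, hry, hrd, hnd2, inner_expand, ← ha, ← hb, real_inner_comm dh uh, ← hc,
      real_inner_self_eq_norm_sq, ← hDuDef]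
    congr 1
    field_simp
    ring
  rw [hbeta1, hbeta2, hRp, hfp, hsig1, hsig2]
  have key : (b - a * c / Dd) / (σy * (sK / ‖dh‖)) * (c / sK) * (σy / ‖dh‖) =
      (b - a * c / Dd) * c / K := by
    rw [← hsK2]
    field_simp
  rw [key, hK]
  have hKne : Dd * Du - c ^ 2 ≠ 0 := by rw [← hK]; exact hKpos.ne'
  have hKne' : Du * Dd - c ^ 2 ≠ 0 := by rw [mul_comm]; exact hKne
  field_simp [hDd.ne', hDu.ne', hd2'.ne', hKne, hKne']
  ring
end
end
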